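/- For every positive integer n, D(n) is equal to the number of nonempty subsets A of {1, 2, ..., n} such that gcd(A) divides n. Moreover, for every positive integer n ≥ 1, D(n) + d(n) + 1 ≡ 0 (mod 3), where d(n) is the number of positive divisors of n. -/

import Mathlib

/-- `f n` is the number of nonempty relatively prime subsets of `{1, ..., n}`. -/
def f (n : ℕ) : ℕ :=
  ((Finset.Icc 1 n).powerset.filter fun A => A.Nonempty ∧ A.gcd id = 1).card

/-- `D n = ∑_{d ∣ n} f d` is the divisor sum of `f`. -/
def D (n : ℕ) : ℕ := ∑ d ∈ n.divisors, f d

lemma f_one : f 1 = 1 := by decide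

lemma image_mul_div (g : ℕ) (A : Finset ℕ) (hA : ∀ a ∈ A, g ∣ a) :
    (A.image (· / g)).image (g * ·) = A := by
  rw [Finset.image_image]
  have h : ∀ a ∈ A, ((g * ·) ∘ (· / g)) a = id a := fun a ha => Nat.mul_div_cancel' (hA a ha)
  rw [Finset.image_congr h, Finset.image_id]

lemma image_div_mul (g : ℕ) (hg : 0 < g) (B : Finset ℕ) :
    (B.image (g * ·)).image (· / g) = B := by
  rw [Finset.image_image]
  have h : ∀ b ∈ B, ((· / g) ∘ (g * ·)) b = id b := fun b _ => Nat.mul_div_cancel_left b hg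
  rw [Finset.image_congr h, Finset.image_id]

lemma gcd_image_mul (g : ℕ) (B : Finset ℕ) :
    (B.image (g * ·)).gcd id = g * B.gcd id := by
  rw [Finset.gcd_image]
  have : (id ∘ (g * ·)) = fun x : ℕ => g * id x := rfl
  rw [this, Finset.gcd_mul_left]
  simp

/-- The nonempty subsets of `{1,...,m}` with gcd exactly `g` are in bijection with the
nonempty relatively prime subsets of `{1,...,m/g}`. -/
lemma card_gcd_fiber (m g : ℕ) (hg : 0 < g) :
    ((Finset.Icc 1 m).powerset.filter fun A => A.Nonempty ∧ A.gcd id = g).card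
      = f (m / g) := by
  rw [f]
  refine Finset.card_bij' (fun A _ => A.image (· / g)) (fun B _ => B.image (g * ·))
    ?_ ?_ ?_ ?_
  · intro A hA
    simp only [Finset.mem_filter, Finset.mem_powerset] at hA ⊢
    obtain ⟨hsub, hne, hgcd⟩ := hA
    have hdvd : ∀ a ∈ A, g ∣ a := fun a ha => hgcd ▸ Finset.gcd_dvd ha
    refine ⟨?_, hne.image _, ?_⟩
    · intro x hx
      simp only [Finset.mem_image] at hx
      obtain ⟨a, ha, rfl⟩ := hx
      have h1 : a ∈ Finset.Icc 1 m := hsub ha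
      simp only [Finset.mem_Icc] at h1 ⊢
      constructor
      · exact Nat.one_le_div_iff hg |>.mpr (Nat.le_of_dvd (by omega) (hdvd a ha))
      · exact Nat.div_le_div_right h1.2
    · have hrec : ((A.image (· / g)).image (g * ·)) = A := image_mul_div g A hdvd
      have h2 : g * (A.image (· / g)).gcd id = g := by
        rw [← gcd_image_mul, hrec, hgcd]
      nlinarith [Nat.le_of_eq h2, (A.image (· / g)).gcd id]
  · intro B hB
    simp only [Finset.mem_filter, Finset.mem_powerset] at hB ⊢
    obtain ⟨hsub, hne, hgcd⟩ := hB
    refine ⟨?_, hne.image _, ?_⟩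
    · intro x hx
      simp only [Finset.mem_image] at hx
      obtain ⟨b, hb, rfl⟩ := hx
      have h1 : b ∈ Finset.Icc 1 (m / g) := hsub hb
      simp only [Finset.mem_Icc] at h1 ⊢
      constructor
      · calc 1 ≤ g := hg
          _ ≤ g * b := Nat.le_mul_of_pos_right g h1.1
      · calc g * b ≤ g * (m / g) := Nat.mul_le_mul_left g h1.2
          _ ≤ m := Nat.mul_div_le m g
    · rw [gcd_image_mul, hgcd, mul_one]
  · intro A hA
    simp only [Finset.mem_filter, Finset.mem_powerset] at hA
    exact image_mul_div g A (fun a ha => hA.2.2 ▸ Finset.gcd_dvd ha)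
  · intro B _
    exact image_div_mul g hg B

/-- Counting fiberwise over the gcd: subsets with gcd dividing `n`. -/
lemma card_filter_gcd_dvd (n : ℕ) (hn : 0 < n) :
    ((Finset.Icc 1 n).powerset.filter fun A => A.Nonempty ∧ A.gcd id ∣ n).card
      = ∑ g ∈ n.divisors, f (n / g) := by
  rw [Finset.card_eq_sum_card_fiberwise (f := fun A => A.gcd id) (t := n.divisors)
    (fun A hA => by
      simp only [Finset.mem_coe, Finset.mem_filter, Finset.mem_powerset] at hA
      exact Nat.mem_divisors.mpr ⟨hA.2.2, hn.ne'⟩)]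
  refine Finset.sum_congr rfl fun g hg => ?_
  have hg1 : 0 < g := Nat.pos_of_mem_divisors hg
  rw [← card_gcd_fiber n g hg1]
  congr 1
  rw [Finset.filter_filter]
  apply Finset.filter_congr
  intro A _
  constructor
  · rintro ⟨⟨hne, _⟩, hgcd⟩; exact ⟨hne, hgcd⟩
  · rintro ⟨hne, hgcd⟩; exact ⟨⟨hne, hgcd ▸ (Nat.mem_divisors.mp hg).1⟩, hgcd⟩

/-- Partitioning all nonempty subsets of `{1,...,m}` by their gcd. -/
lemma two_pow_sub_one (m : ℕ) :
    2 ^ m - 1 = ∑ g ∈ Finset.Icc 1 m, f (m / g) := by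
  have hcard : ((Finset.Icc 1 m).powerset.filter fun A => A.Nonempty).card = 2 ^ m - 1 := by
    have h1 : ((Finset.Icc 1 m).powerset.filter fun A => A.Nonempty)
        = (Finset.Icc 1 m).powerset.erase ∅ := by
      ext A
      simp [Finset.mem_erase, Finset.nonempty_iff_ne_empty, and_comm]
    rw [h1, Finset.card_erase_of_mem (Finset.empty_mem_powerset _),
      Finset.card_powerset, Nat.card_Icc]
    simp
  rw [← hcard]
  rw [Finset.card_eq_sum_card_fiberwise (f := fun A => A.gcd id) (t := Finset.Icc 1 m)
    (fun A hA => by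
      simp only [Finset.mem_coe, Finset.mem_filter, Finset.mem_powerset] at hA
      obtain ⟨hsub, a, ha⟩ := hA
      have h1 : a ∈ Finset.Icc 1 m := hsub ha
      simp only [Finset.mem_coe, Finset.mem_Icc] at h1 ⊢
      have hd : A.gcd id ∣ a := Finset.gcd_dvd ha
      exact ⟨Nat.pos_of_dvd_of_pos hd (by omega), le_trans (Nat.le_of_dvd (by omega) hd) h1.2⟩)]
  refine Finset.sum_congr rfl fun g hg => ?_
  simp only [Finset.mem_Icc] at hg
  rw [← card_gcd_fiber m g (by omega)]
  congr 1
  rw [Finset.filter_filter]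

lemma two_pow_mod_three (m : ℕ) : 2 ^ m % 3 = if m % 2 = 0 then 1 else 2 := by
  induction m with
  | zero => rfl
  | succ k ih =>
    rw [pow_succ, Nat.mul_mod, ih]
    split_ifs with h h' h' <;> omega

lemma f_mod_three : ∀ m, 2 ≤ m → f m % 3 = 2 := by
  intro m
  induction m using Nat.strong_induction_on with
  | _ m ih =>
    intro hm
    have hicc : Finset.Icc 1 m = insert 1 (Finset.Icc 2 m) := by
      ext x
      simp only [Finset.mem_Icc, Finset.mem_insert]
      omega
    have hnm : (1 : ℕ) ∉ Finset.Icc 2 m := by simp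
    have key : 2 ^ m - 1 = f m + ∑ g ∈ Finset.Icc 2 m, f (m / g) := by
      rw [two_pow_sub_one m, hicc, Finset.sum_insert hnm, Nat.div_one]
    set S := ∑ g ∈ Finset.Icc 2 m, f (m / g) with hSdef
    have hS : S % 3 = (∑ g ∈ Finset.Icc 2 m, if m / g = 1 then 1 else 2) % 3 := by
      rw [hSdef, Finset.sum_nat_mod]
      congr 1
      refine Finset.sum_congr rfl fun g hg => ?_
      simp only [Finset.mem_Icc] at hg
      by_cases h1 : m / g = 1
      · simp [h1, f_one]
      · have hq1 : 1 ≤ m / g := Nat.one_le_div_iff (by omega) |>.mpr hg.2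
        have hq2 : 2 ≤ m / g := by omega
        have hlt : m / g < m := Nat.div_lt_self (by omega) (by omega)
        rw [ih _ hlt hq2]
        simp [h1]
    have hfilter : (Finset.Icc 2 m).filter (fun g => m / g = 1)
        = Finset.Icc (m / 2 + 1) m := by
      ext g
      simp only [Finset.mem_filter, Finset.mem_Icc]
      by_cases hg0 : g = 0
      · subst hg0; simp
      have hq1 : 1 ≤ m / g ↔ g ≤ m := Nat.one_le_div_iff (by omega)
      have hq2 : 2 ≤ m / g ↔ 2 * g ≤ m := by
        rw [Nat.le_div_iff_mul_le (by omega)]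
      omega
    have hsplit : (∑ g ∈ Finset.Icc 2 m, if m / g = 1 then (1:ℕ) else 2)
        = ((Finset.Icc 2 m).filter (fun g => m / g = 1)).card * 1
          + ((Finset.Icc 2 m).filter (fun g => ¬ m / g = 1)).card * 2 := by
      rw [Finset.sum_ite, Finset.sum_const, Finset.sum_const, smul_eq_mul, smul_eq_mul]
    have hc1 : ((Finset.Icc 2 m).filter (fun g => m / g = 1)).card = m - m / 2 := by
      rw [hfilter, Nat.card_Icc]; omega
    have hctot : ((Finset.Icc 2 m).filter (fun g => m / g = 1)).card
        + ((Finset.Icc 2 m).filter (fun g => ¬ m / g = 1)).card = m - 1 := by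
      rw [Finset.card_filter_add_card_filter_not, Nat.card_Icc]; omega
    have hpow : 2 ^ m % 3 = if m % 2 = 0 then 1 else 2 := two_pow_mod_three m
    have hpow1 : 1 ≤ 2 ^ m := Nat.one_le_two_pow
    rcases Nat.mod_two_eq_zero_or_one m with h | h <;> simp [h] at hpow <;> omega

/-- `D(n)` counts the nonempty subsets `A` of `{1, ..., n}` with `gcd(A) ∣ n`; moreover
`D(n) + d(n) + 1 ≡ 0 (mod 3)`, where `d(n)` is the number of positive divisors of `n`. -/
theorem D_count_and_congruence (n : ℕ) (hn : 0 < n) :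
    D n = ((Finset.Icc 1 n).powerset.filter fun A => A.Nonempty ∧ A.gcd id ∣ n).card ∧
    (D n + n.divisors.card + 1) % 3 = 0 := by
  constructor
  · rw [card_filter_gcd_dvd n hn, D]
    exact (Nat.sum_div_divisors n f).symm
  · have hf1 : n.divisors.filter (fun d => d = 1) = {1} := by
      ext d
      simp only [Finset.mem_filter, Nat.mem_divisors, Finset.mem_singleton]
      constructor
      · rintro ⟨_, h⟩; exact h
      · rintro rfl; exact ⟨⟨one_dvd n, hn.ne'⟩, rfl⟩
    have hctot : (n.divisors.filter (fun d => d = 1)).card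
        + (n.divisors.filter (fun d => ¬ d = 1)).card = n.divisors.card :=
      Finset.card_filter_add_card_filter_not _
    have hc1 : (n.divisors.filter (fun d => d = 1)).card = 1 := by rw [hf1]; rfl
    have hD : D n % 3 = ((n.divisors.filter (fun d => d = 1)).card * 1
        + (n.divisors.filter (fun d => ¬ d = 1)).card * 2) % 3 := by
      rw [D, Finset.sum_nat_mod]
      have h2 : ∑ d ∈ n.divisors, f d % 3 = ∑ d ∈ n.divisors, (if d = 1 then 1 else 2) := by
        refine Finset.sum_congr rfl fun d hd => ?_
        by_cases h : d = 1
        · simp [h, f_one]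
        · have hd1 : 0 < d := Nat.pos_of_mem_divisors hd
          rw [f_mod_three d (by omega)]
          simp [h]
      rw [h2, Finset.sum_ite, Finset.sum_const, Finset.sum_const, smul_eq_mul, smul_eq_mul]
    omega
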